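/- The digit-swapping function f on (0,1) (swapping binary digits in positions 2n and 2n+1) is not contained in any countable union of monotone functions each of whose domains intersected with dom(f) is Lebesgue measurable. -/

import Mathlib

open MeasureTheory

/-- The real number with binary digit sequence `a` (digit `i` in position `i+1`). -/
noncomputable def bval (a : ℕ → Bool) : ℝ :=
  ∑' i : ℕ, (if a i then ((2 : ℝ) ^ (i + 1))⁻¹ else 0)

/-- Swap adjacent binary digits: positions `2n` and `2n+1` are exchanged. -/
def bswap (a : ℕ → Bool) : ℕ → Bool :=
  fun n => if n % 2 = 0 then a (n + 1) else a (n - 1)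

/-- The graph of the digit-swapping function `f`, defined on reals in `(0,1)`
with a unique binary expansion. -/
def swapGraph : Set (ℝ × ℝ) :=
  {p | ∃ a : ℕ → Bool, bval a = p.1 ∧ (∀ b : ℕ → Bool, bval b = p.1 → b = a) ∧
    p.1 ∈ Set.Ioo (0 : ℝ) 1 ∧ p.2 = bval (bswap a)}

noncomputable def bterm (b : ℕ → Bool) (i : ℕ) : ℝ :=
  if b i then ((2 : ℝ) ^ (i + 1))⁻¹ else 0

lemma bterm_nonneg (b : ℕ → Bool) (i : ℕ) : 0 ≤ bterm b i := by
  unfold bterm; split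
  · positivity
  · exact le_refl 0

lemma bterm_le (b : ℕ → Bool) (i : ℕ) : bterm b i ≤ ((2 : ℝ) ^ (i + 1))⁻¹ := by
  unfold bterm; split
  · exact le_refl _
  · positivity

lemma summable_pow : Summable (fun i : ℕ => ((2 : ℝ) ^ (i + 1))⁻¹) := by
  have h : Summable (fun i : ℕ => ((1:ℝ)/2) * ((1:ℝ)/2) ^ i) :=
    (summable_geometric_two).mul_left _
  refine h.congr fun i => ?_
  rw [← pow_succ']
  rw [div_pow, one_pow, one_div]

lemma summable_bterm (b : ℕ → Bool) : Summable (bterm b) :=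
  Summable.of_nonneg_of_le (bterm_nonneg b) (bterm_le b) summable_pow

lemma bval_eq (b : ℕ → Bool) : bval b = ∑' i, bterm b i := rfl

noncomputable def btail (k : ℕ) (b : ℕ → Bool) : ℝ := ∑' i : ℕ, bterm b (i + k)

lemma bval_split (b : ℕ → Bool) (k : ℕ) :
    bval b = (∑ i ∈ Finset.range k, bterm b i) + btail k b := by
  rw [bval_eq, btail]
  exact ((summable_bterm b).sum_add_tsum_nat_add k).symm

lemma btail_nonneg (k : ℕ) (b : ℕ → Bool) : 0 ≤ btail k b :=
  tsum_nonneg fun i => bterm_nonneg b _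

lemma geom_tail (k : ℕ) : (∑' i : ℕ, ((2 : ℝ) ^ (i + k + 1))⁻¹) = ((2:ℝ)^k)⁻¹ := by
  have h : ∀ i : ℕ, ((2 : ℝ) ^ (i + k + 1))⁻¹ = (((2:ℝ)^(k+1))⁻¹) * ((1:ℝ)/2)^i := by
    intro i
    rw [div_pow, one_pow, one_div, ← mul_inv, ← pow_add]
    ring_nf
  rw [tsum_congr h, tsum_mul_left, tsum_geometric_two]
  rw [pow_succ]
  field_simp

lemma btail_le (k : ℕ) (b : ℕ → Bool) : btail k b ≤ ((2:ℝ)^k)⁻¹ := by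
  rw [btail, ← geom_tail k]
  have h1 : Summable fun i : ℕ => bterm b (i + k) := (summable_nat_add_iff (f := bterm b) k).2 (summable_bterm b)
  have h2 : Summable fun i : ℕ => ((2:ℝ) ^ (i + k + 1))⁻¹ := (summable_nat_add_iff (f := fun i : ℕ => ((2:ℝ) ^ (i + 1))⁻¹) k).2 summable_pow
  exact Summable.tsum_le_tsum (fun i => bterm_le b _) h1 h2

lemma btail_eq_of_true (k : ℕ) (b : ℕ → Bool) (h : ∀ j, k ≤ j → b j = true) :
    btail k b = ((2:ℝ)^k)⁻¹ := by
  rw [btail, ← geom_tail k]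
  refine tsum_congr fun i => ?_
  rw [bterm, h (i + k) (by omega)]
  simp

lemma btail_succ (k : ℕ) (b : ℕ → Bool) : btail k b = bterm b k + btail (k+1) b := by
  rw [btail, btail]
  rw [Summable.tsum_eq_zero_add ((summable_nat_add_iff (f := bterm b) k).2 (summable_bterm b) : Summable fun i => bterm b (i + k))]
  simp only [zero_add]
  congr 1
  exact tsum_congr fun i => by ring_nf

lemma btail_le_sub (b : ℕ → Bool) : ∀ (n k : ℕ), b (k + n) = false →
    btail k b ≤ ((2:ℝ)^k)⁻¹ - ((2:ℝ)^(k+n+1))⁻¹ := by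
  intro n
  induction n with
  | zero =>
    intro k hk
    simp only [Nat.add_zero] at hk
    rw [btail_succ, bterm, hk]
    have h2 := btail_le (k+1) b
    simp only [Bool.false_eq_true, if_false, zero_add]
    have : ((2:ℝ)^(k+1))⁻¹ = ((2:ℝ)^k)⁻¹ - ((2:ℝ)^(k+0+1))⁻¹ := by
      rw [pow_succ]; field_simp; ring
    linarith
  | succ n ih =>
    intro k hk
    rw [btail_succ]
    have h1 := bterm_le b k
    have h2 := ih (k+1) (by rw [← hk]; congr 1; omega)
    have h3 : ((2:ℝ)^(k+1))⁻¹ + (((2:ℝ)^(k+1))⁻¹ - ((2:ℝ)^(k+1+n+1))⁻¹)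
        = ((2:ℝ)^k)⁻¹ - ((2:ℝ)^(k+(n+1)+1))⁻¹ := by
      have : (2:ℝ)^(k+1) = 2^k * 2 := pow_succ 2 k
      have h4 : (2:ℝ)^(k+1+n+1) = 2^(k+(n+1)+1) := by ring_nf
      rw [h4, this]
      field_simp
      ring
    linarith

lemma btail_lt (k j : ℕ) (b : ℕ → Bool) (hkj : k ≤ j) (hj : b j = false) :
    btail k b < ((2:ℝ)^k)⁻¹ := by
  have := btail_le_sub b (j - k) k (by rw [← hj]; congr 1; omega)
  have hpos : (0:ℝ) < ((2:ℝ)^(k+(j-k)+1))⁻¹ := by positivity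
  linarith

noncomputable def dig (x : ℝ) (i : ℕ) : Bool := decide (⌊x * 2 ^ (i + 1)⌋ % 2 = 1)

lemma floor_succ (x : ℝ) (k : ℕ) :
    ⌊x * 2 ^ (k + 1)⌋ = 2 * ⌊x * 2 ^ k⌋ + (if dig x k then 1 else 0) := by
  have hm1 : (⌊x * 2 ^ k⌋ : ℝ) ≤ x * 2 ^ k := Int.floor_le _
  have hm2 : x * 2 ^ k < ⌊x * 2 ^ k⌋ + 1 := Int.lt_floor_add_one _
  have hle : 2 * ⌊x * 2 ^ k⌋ ≤ ⌊x * 2 ^ (k + 1)⌋ := by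
    apply Int.le_floor.2
    push_cast
    rw [pow_succ]
    nlinarith
  have hlt : ⌊x * 2 ^ (k + 1)⌋ < 2 * ⌊x * 2 ^ k⌋ + 2 := by
    apply Int.floor_lt.2
    push_cast
    rw [pow_succ]
    nlinarith
  unfold dig
  rcases (by omega : ⌊x * 2 ^ (k + 1)⌋ = 2 * ⌊x * 2 ^ k⌋ ∨
      ⌊x * 2 ^ (k + 1)⌋ = 2 * ⌊x * 2 ^ k⌋ + 1) with h | h <;> rw [h]
  · have : ¬ ((2 * ⌊x * 2 ^ k⌋) % 2 = 1) := by omega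
    simp [this]
  · have : (2 * ⌊x * 2 ^ k⌋ + 1) % 2 = 1 := by omega
    simp [this]

lemma partial_sum (x : ℝ) (h0 : 0 ≤ x) (h1 : x < 1) (k : ℕ) :
    (∑ i ∈ Finset.range k, bterm (dig x) i) = (⌊x * 2 ^ k⌋ : ℝ) / 2 ^ k := by
  induction k with
  | zero =>
    simp only [Finset.range_zero, Finset.sum_empty, pow_zero, mul_one]
    rw [Int.floor_eq_zero_iff.2 (by constructor <;> simpa)]
    simp
  | succ k ih =>
    rw [Finset.sum_range_succ, ih, bterm]
    have hf := floor_succ x k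
    cases hd : dig x k <;> rw [hd] at hf <;> simp only [if_true, if_false,
        Bool.false_eq_true] at hf ⊢ <;> rw [hf] <;> push_cast <;> rw [pow_succ] <;>
      field_simp <;> ring

def DyadicR : Set ℝ := {x | ∃ (j : ℕ) (m : ℤ), x = (m : ℝ) / 2 ^ j}

lemma countable_Dyadic : DyadicR.Countable := by
  have : DyadicR = ⋃ (j : ℕ), ⋃ (m : ℤ), {((m : ℝ) / 2 ^ j)} := by
    ext x; simp only [DyadicR, Set.mem_setOf_eq, Set.mem_iUnion, Set.mem_singleton_iff]
  rw [this]
  exact Set.countable_iUnion fun j => Set.countable_iUnion fun m => Set.countable_singleton _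

lemma fract_pos (x : ℝ) (hx : x ∉ DyadicR) (k : ℕ) : (⌊x * 2 ^ k⌋ : ℝ) < x * 2 ^ k := by
  rcases lt_or_eq_of_le (Int.floor_le (x * 2 ^ k)) with h | h
  · exact h
  · exfalso
    apply hx
    refine ⟨k, ⌊x * 2 ^ k⌋, ?_⟩
    rw [eq_div_iff (by positivity : ((2:ℝ) ^ k) ≠ 0)]
    linarith

lemma sub_bounds (x : ℝ) (hx : x ∉ DyadicR) (k : ℕ) :
    0 < x - (⌊x * 2 ^ k⌋ : ℝ) / 2 ^ k ∧ x - (⌊x * 2 ^ k⌋ : ℝ) / 2 ^ k < ((2:ℝ) ^ k)⁻¹ := by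
  have h1 := fract_pos x hx k
  have h2 := Int.lt_floor_add_one (x * 2 ^ k)
  have hp : (0:ℝ) < 2 ^ k := by positivity
  constructor
  · rw [sub_pos, div_lt_iff₀ hp]
    linarith
  · have h3 : x < ((⌊x * 2 ^ k⌋ : ℝ) + 1) / 2 ^ k := by
      rw [lt_div_iff₀ hp]; linarith
    have h4 : ((⌊x * 2 ^ k⌋ : ℝ) + 1) / 2 ^ k = (⌊x * 2 ^ k⌋ : ℝ) / 2 ^ k + ((2:ℝ) ^ k)⁻¹ := by
      field_simp
    linarith

lemma bval_dig (x : ℝ) (h0 : 0 ≤ x) (h1 : x < 1) : bval (dig x) = x := by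
  have key : ∀ k : ℕ, |bval (dig x) - x| ≤ 2 * ((1:ℝ)/2) ^ k := by
    intro k
    have hsplit := bval_split (dig x) k
    have hps := partial_sum x h0 h1 k
    have ht1 := btail_nonneg k (dig x)
    have ht2 := btail_le k (dig x)
    have hf1 : (⌊x * 2 ^ k⌋ : ℝ) ≤ x * 2 ^ k := Int.floor_le _
    have hf2 : x * 2 ^ k < ⌊x * 2 ^ k⌋ + 1 := Int.lt_floor_add_one _
    have hp : (0:ℝ) < 2 ^ k := by positivity
    have heq : ((1:ℝ)/2) ^ k = ((2:ℝ) ^ k)⁻¹ := by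
      rw [div_pow, one_pow, one_div]
    rw [heq]
    rw [abs_le]
    have hd1 : (⌊x * 2 ^ k⌋ : ℝ) / 2 ^ k ≤ x := by rw [div_le_iff₀ hp]; linarith
    have hd2 : x - ((2:ℝ)^k)⁻¹ < (⌊x * 2 ^ k⌋ : ℝ) / 2 ^ k := by
      have h3 : x < ((⌊x * 2 ^ k⌋ : ℝ) + 1) / 2 ^ k := by
        rw [lt_div_iff₀ hp]; linarith
      have h4 : ((⌊x * 2 ^ k⌋ : ℝ) + 1) / 2 ^ k = (⌊x * 2 ^ k⌋ : ℝ) / 2 ^ k + ((2:ℝ) ^ k)⁻¹ := by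
        field_simp
      linarith
    constructor <;> rw [hsplit, hps] <;> nlinarith [hp, inv_pos.2 hp]
  by_contra hne
  have habs : 0 < |bval (dig x) - x| := abs_pos.2 (sub_ne_zero.2 hne)
  obtain ⟨k, hk⟩ := exists_pow_lt_of_lt_one (by linarith : (0:ℝ) < |bval (dig x) - x| / 2)
    (by norm_num : (1:ℝ)/2 < 1)
  have := key k
  linarith

lemma dig_unique (x : ℝ) (h0 : 0 ≤ x) (h1 : x < 1) (hnd : x ∉ DyadicR)
    (b : ℕ → Bool) (hb : bval b = x) : b = dig x := by
  funext i
  induction i using Nat.strong_induction_on with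
  | _ i ih =>
    have hagree : ∀ j ∈ Finset.range i, bterm b j = bterm (dig x) j := by
      intro j hj
      rw [bterm, bterm, ih j (Finset.mem_range.1 hj)]
    have hP : (∑ j ∈ Finset.range i, bterm b j) = (⌊x * 2 ^ i⌋ : ℝ) / 2 ^ i := by
      rw [Finset.sum_congr rfl hagree, partial_sum x h0 h1]
    have hsplit : x = (⌊x * 2 ^ i⌋ : ℝ) / 2 ^ i + bterm b i + btail (i + 1) b := by
      conv_lhs => rw [← hb, bval_split b (i + 1), Finset.sum_range_succ, hP]
    have hSi : (⌊x * 2 ^ (i+1)⌋ : ℝ) / 2 ^ (i+1)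
        = (⌊x * 2 ^ i⌋ : ℝ) / 2 ^ i + bterm (dig x) i := by
      have := partial_sum x h0 h1 (i + 1)
      rw [Finset.sum_range_succ, partial_sum x h0 h1 i] at this
      linarith
    have hb1 := (sub_bounds x hnd (i + 1)).1
    have hb2 := (sub_bounds x hnd (i + 1)).2
    have htail1 := btail_nonneg (i + 1) b
    have htail2 := btail_le (i + 1) b
    cases hdx : dig x i <;> cases hbi : b i
    · rfl
    · exfalso
      simp only [bterm, hdx, hbi, Bool.false_eq_true, if_false, if_true, add_zero]
        at hSi hsplit
      linarith
    · exfalso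
      simp only [bterm, hdx, hbi, Bool.false_eq_true, if_false, if_true, add_zero]
        at hSi hsplit
      linarith
    · rfl

lemma floor_step_eq (u v : ℝ) (k : ℕ) (h : ⌊u * 2 ^ (k+1)⌋ = ⌊v * 2 ^ (k+1)⌋) :
    ⌊u * 2 ^ k⌋ = ⌊v * 2 ^ k⌋ := by
  have h1 := floor_succ u k
  have h2 := floor_succ v k
  have e1 : (if dig u k then (1:ℤ) else 0) = 0 ∨ (if dig u k then (1:ℤ) else 0) = 1 := by
    split <;> simp
  have e2 : (if dig v k then (1:ℤ) else 0) = 0 ∨ (if dig v k then (1:ℤ) else 0) = 1 := by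
    split <;> simp
  omega

lemma floors_eq (u v : ℝ) : ∀ (N : ℕ), ⌊u * 2 ^ N⌋ = ⌊v * 2 ^ N⌋ →
    ∀ j ≤ N, ⌊u * 2 ^ j⌋ = ⌊v * 2 ^ j⌋ := by
  intro N
  induction N with
  | zero =>
    intro h j hj
    obtain rfl := Nat.le_zero.1 hj
    exact h
  | succ N ih =>
    intro h j hj
    rcases Nat.eq_or_lt_of_le hj with rfl | hlt
    · exact h
    · exact ih (floor_step_eq u v N h) j (by omega)

lemma dig_eq_of_floor_eq (u v : ℝ) (N : ℕ) (h : ⌊u * 2 ^ N⌋ = ⌊v * 2 ^ N⌋)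
    (i : ℕ) (hi : i + 1 ≤ N) : dig u i = dig v i := by
  unfold dig
  rw [floors_eq u v N h (i + 1) hi]

lemma exists_dig_false (x : ℝ) (h0 : 0 ≤ x) (h1 : x < 1) (hnd : x ∉ DyadicR) (N : ℕ) :
    ∃ j, N ≤ j ∧ dig x j = false := by
  by_contra hc
  push_neg at hc
  have hall : ∀ j, N ≤ j → dig x j = true := by
    intro j hj
    cases h : dig x j
    · exact absurd h (hc j hj)
    · rfl
  have ht := btail_eq_of_true N (dig x) hall
  have hsplit := bval_split (dig x) N
  rw [bval_dig x h0 h1, partial_sum x h0 h1, ht] at hsplit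
  have := (sub_bounds x hnd N).2
  linarith

lemma bswap_even (a : ℕ → Bool) (k : ℕ) : bswap a (2*k) = a (2*k+1) := by
  unfold bswap
  rw [if_pos (by omega)]

lemma bswap_odd (a : ℕ → Bool) (k : ℕ) : bswap a (2*k+1) = a (2*k) := by
  unfold bswap
  have h : ¬ ((2*k+1) % 2 = 0) := by omega
  simp only [h, if_false]
  exact congrArg a (by omega)

lemma bterm_bswap_even (c : ℕ → Bool) (k : ℕ) :
    bterm (bswap c) (2*k) = if c (2*k+1) then ((2:ℝ)^(2*k+1))⁻¹ else 0 := by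
  rw [bterm, bswap_even]

lemma bterm_bswap_odd (c : ℕ → Bool) (k : ℕ) :
    bterm (bswap c) (2*k+1) = if c (2*k) then ((2:ℝ)^(2*k+2))⁻¹ else 0 := by
  rw [bterm, bswap_odd]

lemma bval_bswap_decomp (c : ℕ → Bool) (k : ℕ) :
    bval (bswap c) = (∑ i ∈ Finset.range (2*k), bterm (bswap c) i)
      + (if c (2*k+1) then ((2:ℝ)^(2*k+1))⁻¹ else 0)
      + (if c (2*k) then ((2:ℝ)^(2*k+2))⁻¹ else 0)
      + btail (2*k+2) (bswap c) := by
  have h := bval_split (bswap c) (2*k+2)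
  rw [show (2*k+2) = (2*k+1)+1 from rfl, Finset.sum_range_succ, Finset.sum_range_succ] at h
  rw [h, bterm_bswap_even, bterm_bswap_odd]
  all_goals norm_num

lemma prefix_eq (u v : ℝ) (k : ℕ) (h : ⌊u * 2 ^ (2*k)⌋ = ⌊v * 2 ^ (2*k)⌋) :
    (∑ i ∈ Finset.range (2*k), bterm (bswap (dig u)) i)
      = ∑ i ∈ Finset.range (2*k), bterm (bswap (dig v)) i := by
  refine Finset.sum_congr rfl fun i hi => ?_
  have hi' := Finset.mem_range.1 hi
  have hsw : bswap (dig u) i = bswap (dig v) i := by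
    unfold bswap
    split
    · next he => exact dig_eq_of_floor_eq u v (2*k) h (i+1) (by omega)
    · next ho => exact dig_eq_of_floor_eq u v (2*k) h (i-1) (by omega)
  rw [bterm, bterm, hsw]

lemma floor_of_mem_Ico (y : ℝ) (M : ℤ) (N : ℕ)
    (hy : y ∈ Set.Ico ((M:ℝ)/2^N) (((M:ℝ)+1)/2^N)) : ⌊y * 2^N⌋ = M := by
  have hp : (0:ℝ) < 2^N := by positivity
  rw [Int.floor_eq_iff]
  constructor
  · have := hy.1
    rw [div_le_iff₀ hp] at this
    linarith
  · have := hy.2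
    rw [lt_div_iff₀ hp] at this
    push_cast
    linarith

lemma quarter_floors (y : ℝ) (m j : ℤ) (hj0 : 0 ≤ j) (hj : j < 4) (k : ℕ)
    (h : ⌊y * 2^(2*k+2)⌋ = 4*m + j) :
    ⌊y * 2^(2*k)⌋ = m ∧ ⌊y * 2^(2*k+1)⌋ = 2*m + j/2 := by
  have h1 := floor_succ y (2*k+1)
  have h2 := floor_succ y (2*k)
  rw [show (2*k+1)+1 = 2*k+2 from rfl] at h1
  have e1 : (if dig y (2*k+1) then (1:ℤ) else 0) = 0 ∨ (if dig y (2*k+1) then (1:ℤ) else 0) = 1 := by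
    split <;> simp
  have e2 : (if dig y (2*k) then (1:ℤ) else 0) = 0 ∨ (if dig y (2*k) then (1:ℤ) else 0) = 1 := by
    split <;> simp
  omega

lemma exists_bswap_false (c : ℕ → Bool) (k : ℕ) (h : ∃ j, 2*k+2 ≤ j ∧ c j = false) :
    ∃ p, 2*k+2 ≤ p ∧ bswap c p = false := by
  obtain ⟨j, hj, hc⟩ := h
  rcases Nat.even_or_odd j with he | ho
  · rw [Nat.even_iff] at he
    refine ⟨j+1, by omega, ?_⟩
    unfold bswap
    rw [if_neg (by omega)]
    simpa using hc
  · rw [Nat.odd_iff] at ho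
    refine ⟨j-1, by omega, ?_⟩
    unfold bswap
    rw [if_pos (by omega)]
    rw [show j - 1 + 1 = j by omega]
    exact hc

lemma dig_of_floor_odd (y : ℝ) (i : ℕ) (h : ⌊y * 2^(i+1)⌋ % 2 = 1) : dig y i = true := by
  simp [dig, h]

lemma dig_of_floor_even (y : ℝ) (i : ℕ) (h : ⌊y * 2^(i+1)⌋ % 2 = 0) : dig y i = false := by
  simp [dig, h]

lemma btail_swap_lt (v : ℝ) (hv0 : 0 ≤ v) (hv1 : v < 1) (hvnd : v ∉ DyadicR) (k : ℕ) :
    btail (2*k+2) (bswap (dig v)) < ((2:ℝ)^(2*k+2))⁻¹ := by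
  obtain ⟨p, hp, hfalse⟩ := exists_bswap_false (dig v) k (by
    obtain ⟨j, hj, hf⟩ := exists_dig_false v hv0 hv1 hvnd (2*k+2)
    exact ⟨j, hj, hf⟩)
  exact btail_lt (2*k+2) p (bswap (dig v)) hp hfalse

lemma fval_compare (u v : ℝ) (k : ℕ) (m : ℤ)
    (hu : ⌊u * 2^(2*k+2)⌋ = 4*m+1) (hv : ⌊v * 2^(2*k+2)⌋ = 4*m+2)
    (hv0 : 0 ≤ v) (hv1 : v < 1) (hvnd : v ∉ DyadicR) :
    bval (bswap (dig v)) < bval (bswap (dig u)) := by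
  obtain ⟨hu0, hu1⟩ := quarter_floors u m 1 (by norm_num) (by norm_num) k hu
  obtain ⟨hv0', hv1'⟩ := quarter_floors v m 2 (by norm_num) (by norm_num) k hv
  have hdu1 : dig u (2*k) = false := dig_of_floor_even u (2*k) (by rw [hu1]; omega)
  have hdu2 : dig u (2*k+1) = true := dig_of_floor_odd u (2*k+1)
    (by rw [show (2*k+1)+1 = 2*k+2 from rfl, hu]; omega)
  have hdv1 : dig v (2*k) = true := dig_of_floor_odd v (2*k) (by rw [hv1']; omega)
  have hdv2 : dig v (2*k+1) = false := dig_of_floor_even v (2*k+1)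
    (by rw [show (2*k+1)+1 = 2*k+2 from rfl, hv]; omega)
  have hpre := prefix_eq u v k (by rw [hu0, hv0'])
  have hdecu := bval_bswap_decomp (dig u) k
  have hdecv := bval_bswap_decomp (dig v) k
  rw [hdu1, hdu2] at hdecu
  rw [hdv1, hdv2] at hdecv
  simp only [if_true, if_false, Bool.false_eq_true, add_zero, zero_add] at hdecu hdecv
  have ht1 := btail_nonneg (2*k+2) (bswap (dig u))
  have ht2 := btail_swap_lt v hv0 hv1 hvnd k
  have hpow : ((2:ℝ)^(2*k+1))⁻¹ = 2 * ((2:ℝ)^(2*k+2))⁻¹ := by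
    rw [show (2*k+2) = (2*k+1)+1 from rfl, pow_succ]
    field_simp
    ring
  rw [hdecu, hdecv, ← hpre]
  linarith

lemma fval_compare' (u v : ℝ) (k : ℕ) (m : ℤ)
    (hu : ⌊u * 2^(2*k+2)⌋ = 4*m) (hv : ⌊v * 2^(2*k+2)⌋ = 4*m+3) :
    bval (bswap (dig u)) < bval (bswap (dig v)) := by
  obtain ⟨hu0, hu1⟩ := quarter_floors u m 0 (by norm_num) (by norm_num) k (by rw [hu]; ring)
  obtain ⟨hv0', hv1'⟩ := quarter_floors v m 3 (by norm_num) (by norm_num) k hv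
  have hdu1 : dig u (2*k) = false := dig_of_floor_even u (2*k) (by rw [hu1]; omega)
  have hdu2 : dig u (2*k+1) = false := dig_of_floor_even u (2*k+1)
    (by rw [show (2*k+1)+1 = 2*k+2 from rfl, hu]; omega)
  have hdv1 : dig v (2*k) = true := dig_of_floor_odd v (2*k) (by rw [hv1']; omega)
  have hdv2 : dig v (2*k+1) = true := dig_of_floor_odd v (2*k+1)
    (by rw [show (2*k+1)+1 = 2*k+2 from rfl, hv]; omega)
  have hpre := prefix_eq u v k (by rw [hu0, hv0'])
  have hdecu := bval_bswap_decomp (dig u) k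
  have hdecv := bval_bswap_decomp (dig v) k
  rw [hdu1, hdu2] at hdecu
  rw [hdv1, hdv2] at hdecv
  simp only [if_true, if_false, Bool.false_eq_true, add_zero, zero_add] at hdecu hdecv
  have ht1 := btail_le (2*k+2) (bswap (dig u))
  have ht2 := btail_nonneg (2*k+2) (bswap (dig v))
  have hpow : (0:ℝ) < ((2:ℝ)^(2*k+1))⁻¹ := by positivity
  rw [hdecu, hdecv, ← hpre]
  linarith

open scoped ENNReal
open Filter Topology in
lemma meets_of_measure (A : Set ℝ) (x h q : ℝ) (hh : 0 < h)
    (hq1 : x - h ≤ q) (hq2 : q + h/4 ≤ x + h)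
    (hbig : ENNReal.ofReal (15/16) * volume (Metric.closedBall x h)
      < volume (A ∩ Metric.closedBall x h)) :
    ∃ y, y ∈ A ∧ y ∉ DyadicR ∧ y ∈ Set.Ico q (q + h/4) := by
  by_contra hc
  push_neg at hc
  set B := Metric.closedBall x h with hB
  set Q := Set.Ico q (q + h/4) with hQ
  have hQB : Q ⊆ B := by
    intro y hy
    rw [hB, Real.closedBall_eq_Icc]
    exact ⟨by have := hy.1; linarith, by have := hy.2; linarith⟩
  have hsub : (A \ DyadicR) ∩ B ⊆ B \ Q := by
    rintro y ⟨⟨hyA, hyD⟩, hyB⟩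
    exact ⟨hyB, fun hyQ => (hc y hyA hyD) hyQ⟩
  have hDy0 : volume DyadicR = 0 := countable_Dyadic.measure_zero _
  have h1 : volume (A ∩ B) ≤ volume ((A \ DyadicR) ∩ B) := by
    have : A ∩ B ⊆ ((A \ DyadicR) ∩ B) ∪ DyadicR := by
      rintro y ⟨hyA, hyB⟩
      by_cases hyD : y ∈ DyadicR
      · exact Or.inr hyD
      · exact Or.inl ⟨⟨hyA, hyD⟩, hyB⟩
    calc volume (A ∩ B) ≤ volume (((A \ DyadicR) ∩ B) ∪ DyadicR) := measure_mono this
      _ ≤ volume ((A \ DyadicR) ∩ B) + volume DyadicR := measure_union_le _ _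
      _ = volume ((A \ DyadicR) ∩ B) := by rw [hDy0, add_zero]
  have hQvol : volume Q = ENNReal.ofReal (h/4) := by
    rw [hQ, Real.volume_Ico]
    congr 1
    ring
  have hBvol : volume B = ENNReal.ofReal (2*h) := by
    rw [hB, Real.volume_closedBall]
  have h2 : volume (B \ Q) = ENNReal.ofReal (2*h) - ENNReal.ofReal (h/4) := by
    rw [measure_diff hQB measurableSet_Ico.nullMeasurableSet
      (by rw [hQvol]; exact ENNReal.ofReal_ne_top), hQvol, hBvol]
  have h3 : volume (A ∩ B) ≤ ENNReal.ofReal (2*h - h/4) := by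
    calc volume (A ∩ B) ≤ volume ((A \ DyadicR) ∩ B) := h1
      _ ≤ volume (B \ Q) := measure_mono hsub
      _ = ENNReal.ofReal (2*h) - ENNReal.ofReal (h/4) := h2
      _ = ENNReal.ofReal (2*h - h/4) := (ENNReal.ofReal_sub _ (by linarith)).symm
  have h4 : ENNReal.ofReal (15/16) * volume B = ENNReal.ofReal (15/16 * (2*h)) := by
    rw [hBvol, ← ENNReal.ofReal_mul (by norm_num)]
  rw [h4] at hbig
  have h5 : ENNReal.ofReal (15/16 * (2*h)) < ENNReal.ofReal (2*h - h/4) :=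
    lt_of_lt_of_le hbig h3
  rw [ENNReal.ofReal_lt_ofReal_iff (by linarith)] at h5
  linarith

open Filter Topology

/-- The digit-swapping function is not contained in a countable union of
monotone functions whose agreement sets with it are Lebesgue measurable. -/
theorem swap_not_countable_union_monotone (g : ℕ → ℝ → ℝ) (S : ℕ → Set ℝ)
    (hg : ∀ n, MonotoneOn (g n) (S n) ∨ AntitoneOn (g n) (S n))
    (hmeas : ∀ n, MeasurableSet {x : ℝ | x ∈ S n ∧ (x, g n x) ∈ swapGraph})
    (hcover : ∀ p ∈ swapGraph, ∃ n, p.1 ∈ S n ∧ g n p.1 = p.2) :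
    False := by
  classical
  set A : ℕ → Set ℝ := fun n => {x : ℝ | x ∈ S n ∧ (x, g n x) ∈ swapGraph} with hAdef
  -- coverage of (0,1) minus dyadics
  have hsubcov : Set.Ioo (0:ℝ) 1 \ DyadicR ⊆ ⋃ n, A n := by
    rintro x ⟨hxI, hxD⟩
    have h0 : (0:ℝ) ≤ x := le_of_lt hxI.1
    have h1 : x < 1 := hxI.2
    have hbd : bval (dig x) = x := bval_dig x h0 h1
    have hp : ((x, bval (bswap (dig x))) : ℝ × ℝ) ∈ swapGraph :=
      ⟨dig x, hbd, fun b hb => dig_unique x h0 h1 hxD b hb, hxI, rfl⟩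
    obtain ⟨n, hn1, hn2⟩ := hcover _ hp
    refine Set.mem_iUnion.2 ⟨n, hn1, ?_⟩
    simpa [hn2] using hp
  -- some A n has positive measure
  have hDy0 : volume DyadicR = 0 := countable_Dyadic.measure_zero _
  have hone : (1:ℝ≥0∞) ≤ volume (⋃ n, A n) := by
    calc (1:ℝ≥0∞) = volume (Set.Ioo (0:ℝ) 1) := by simp
      _ = volume (Set.Ioo (0:ℝ) 1 \ DyadicR) := (measure_diff_null hDy0).symm
      _ ≤ volume (⋃ n, A n) := measure_mono hsubcov
  obtain ⟨n, hpos⟩ : ∃ n, volume (A n) ≠ 0 := by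
    by_contra hzero
    push_neg at hzero
    rw [measure_iUnion_null hzero] at hone
    simp at hone
  -- density point
  have hAmeas : MeasurableSet (A n) := hmeas n
  have hden := Besicovitch.ae_tendsto_measure_inter_div_of_measurableSet volume hAmeas
  obtain ⟨x, hxA, hxT⟩ : ∃ x, x ∈ A n ∧ Tendsto
      (fun r => volume (A n ∩ Metric.closedBall x r) / volume (Metric.closedBall x r))
      (𝓝[>] 0) (𝓝 ((A n).indicator 1 x)) := by
    by_contra hcon
    push_neg at hcon
    apply hpos
    exact measure_mono_null (fun y hy => hcon y hy) (ae_iff.1 hden)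
  rw [Set.indicator_of_mem hxA] at hxT
  simp only [Pi.one_apply] at hxT
  have hxT1 : Tendsto
      (fun r => volume (A n ∩ Metric.closedBall x r) / volume (Metric.closedBall x r))
      (𝓝[>] 0) (𝓝 1) := hxT
  have hc1 : ENNReal.ofReal (15/16) < 1 := by
    rw [ENNReal.ofReal_lt_one]
    norm_num
  have hev : ∀ᶠ r in 𝓝[>] (0:ℝ), ENNReal.ofReal (15/16)
      < volume (A n ∩ Metric.closedBall x r) / volume (Metric.closedBall x r) :=
    hxT1.eventually (eventually_gt_nhds hc1)
  obtain ⟨r0, hr0pos, hr0⟩ := (nhdsGT_basis (0:ℝ)).eventually_iff.1 hev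
  obtain ⟨K, hK⟩ := exists_pow_lt_of_lt_one hr0pos (by norm_num : (1:ℝ)/2 < 1)
  set h : ℝ := ((2:ℝ)^(2*K))⁻¹ with hhdef
  have hhpos : 0 < h := by positivity
  have hhlt : h < r0 := by
    have e1 : h = ((1:ℝ)/2)^(2*K) := by
      rw [hhdef, div_pow, one_pow, one_div]
    have e2 : ((1:ℝ)/2)^(2*K) ≤ ((1:ℝ)/2)^K :=
      pow_le_pow_of_le_one (by norm_num) (by norm_num) (by omega)
    rw [e1]
    linarith
  have hratio := hr0 ⟨hhpos, hhlt⟩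
  have hBne : volume (Metric.closedBall x h) ≠ 0 := by
    rw [Real.volume_closedBall]
    exact ne_of_gt (ENNReal.ofReal_pos.2 (by linarith))
  have hBtop : volume (Metric.closedBall x h) ≠ ⊤ := by
    rw [Real.volume_closedBall]
    exact ENNReal.ofReal_ne_top
  have hbig := (ENNReal.lt_div_iff_mul_lt (Or.inl hBne) (Or.inl hBtop)).1 hratio
  -- quarters
  set m : ℤ := ⌊x * 2^(2*K)⌋ with hmdef
  have hp2 : (0:ℝ) < 2^(2*K) := by positivity
  have hxlow : (m:ℝ)/2^(2*K) ≤ x := by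
    rw [div_le_iff₀ hp2]
    exact Int.floor_le _
  have hxhigh : x < (m:ℝ)/2^(2*K) + h := by
    have := Int.lt_floor_add_one (x * 2^(2*K))
    rw [← lt_div_iff₀ hp2] at this
    have e : ((m:ℝ)+1)/2^(2*K) = (m:ℝ)/2^(2*K) + h := by
      rw [hhdef]; field_simp
    linarith [this, e.symm.le]
  have hquarter : ∀ j : ℤ, 0 ≤ j → j < 4 →
      ∃ y, y ∈ A n ∧ y ∉ DyadicR ∧ ⌊y * 2^(2*K+2)⌋ = 4*m + j := by
    intro j hj0 hj4
    have hwidth : h/4 = ((2:ℝ)^(2*K+2))⁻¹ := by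
      rw [hhdef, pow_add]
      norm_num
      ring
    have hq : ((4*m+j : ℤ):ℝ)/2^(2*K+2) + h/4 = (((4*m+j : ℤ):ℝ)+1)/2^(2*K+2) := by
      rw [hwidth]
      field_simp
    have hrel : ((4*m+j : ℤ):ℝ)/2^(2*K+2) = ((m:ℝ) + (j:ℝ)/4)/2^(2*K) := by
      rw [pow_add]
      push_cast
      field_simp
      ring
    have hQ1 : x - h ≤ ((4*m+j : ℤ):ℝ)/2^(2*K+2) := by
      rw [hrel]
      have hjr : (0:ℝ) ≤ (j:ℝ) := by exact_mod_cast hj0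
      have hmono : (m:ℝ)/2^(2*K) ≤ ((m:ℝ) + (j:ℝ)/4)/2^(2*K) := by
        gcongr
        linarith
      linarith
    have hQ2 : ((4*m+j : ℤ):ℝ)/2^(2*K+2) + h/4 ≤ x + h := by
      have hjr : (j:ℝ) ≤ 3 := by exact_mod_cast (by omega : j ≤ 3)
      have hrel2 : (((4*m+j : ℤ):ℝ)+1)/2^(2*K+2) = ((m:ℝ) + ((j:ℝ)+1)/4)/2^(2*K) := by
        rw [pow_add]
        push_cast
        field_simp
        ring
      have hbound : ((m:ℝ) + ((j:ℝ)+1)/4)/2^(2*K) ≤ ((m:ℝ) + 1)/2^(2*K) := by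
        gcongr
        linarith
      have hub : ((m:ℝ)+1)/2^(2*K) = (m:ℝ)/2^(2*K) + h := by
        rw [hhdef]; field_simp
      rw [hq]
      rw [hrel2]
      linarith
    obtain ⟨y, hyA, hyD, hyQ⟩ := meets_of_measure (A n) x h (((4*m+j : ℤ):ℝ)/2^(2*K+2))
      hhpos hQ1 hQ2 hbig
    refine ⟨y, hyA, hyD, ?_⟩
    apply floor_of_mem_Ico y (4*m+j) (2*K+2)
    rw [Set.mem_Ico] at hyQ ⊢
    exact ⟨hyQ.1, by rw [← hq]; exact hyQ.2⟩
  -- the four quarter points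
  obtain ⟨u, huA, huD, huF⟩ := hquarter 1 (by norm_num) (by norm_num)
  obtain ⟨v, hvA, hvD, hvF⟩ := hquarter 2 (by norm_num) (by norm_num)
  obtain ⟨u0, hu0A, hu0D, hu0F⟩ := hquarter 0 (by norm_num) (by norm_num)
  obtain ⟨v3, hv3A, hv3D, hv3F⟩ := hquarter 3 (by norm_num) (by norm_num)
  have hval : ∀ y, y ∈ A n → y ∉ DyadicR →
      g n y = bval (bswap (dig y)) ∧ 0 < y ∧ y < 1 := by
    intro y hy hyD
    have hy2 := hy.2
    simp only [swapGraph, Set.mem_setOf_eq] at hy2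
    obtain ⟨a, ha1, ha2, ha3, ha4⟩ := hy2
    have hady : dig y = a := ha2 (dig y) (bval_dig y (le_of_lt ha3.1) ha3.2)
    exact ⟨by rw [ha4, ← hady], ha3.1, ha3.2⟩
  have horder : ∀ (a b : ℝ) (Ma Mb : ℤ), ⌊a * 2^(2*K+2)⌋ = Ma → ⌊b * 2^(2*K+2)⌋ = Mb →
      Ma < Mb → a < b := by
    intro a b Ma Mb hma hmb hlt
    have hp : (0:ℝ) < 2^(2*K+2) := by positivity
    have h1 : a * 2^(2*K+2) < (Ma:ℝ) + 1 := by rw [← hma]; exact Int.lt_floor_add_one _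
    have h2 : (Mb:ℝ) ≤ b * 2^(2*K+2) := by rw [← hmb]; exact Int.floor_le _
    have h3 : (Ma:ℝ)+1 ≤ (Mb:ℝ) := by exact_mod_cast hlt
    nlinarith
  rcases hg n with hmono | hanti
  · obtain ⟨hgu, hu0', hu1'⟩ := hval u huA huD
    obtain ⟨hgv, hv0', hv1'⟩ := hval v hvA hvD
    have hlt : u < v := horder u v _ _ huF hvF (by omega)
    have hmle := hmono huA.1 hvA.1 (le_of_lt hlt)
    rw [hgu, hgv] at hmle
    have hcmp := fval_compare u v K m huF hvF (le_of_lt hv0') hv1' hvD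
    linarith
  · obtain ⟨hgu, hu0', hu1'⟩ := hval u0 hu0A hu0D
    obtain ⟨hgv, hv0', hv1'⟩ := hval v3 hv3A hv3D
    have hlt : u0 < v3 := horder u0 v3 _ _ hu0F hv3F (by omega)
    have hale := hanti hu0A.1 hv3A.1 (le_of_lt hlt)
    rw [hgu, hgv] at hale
    have hcmp := fval_compare' u0 v3 K m (by rw [hu0F]; ring) hv3F
    linarith
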